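/- If a nonzero Laurent polynomial f satisfies equation (★), then f cannot simultaneously have a nonzero coefficient in some positive degree and a nonzero coefficient in some negative degree; that is, either the support of f is contained in the non-positive integers, or the support of f is contained in the non-negative integers. -/

import Mathlib

open LaurentPolynomial

/-- Equation (★): `(X² − 1)·f·f∨ = b·(X²·f∨ − f) − c·(X·f − X·f∨) + Q·(X² − 1)`,
where `Q = u·v`, `c = u − v`, `b = Q − 1` and `f∨` is the image of `f` under the
`K`-algebra involution of `K[X,X⁻¹]` sending `X` to `X⁻¹`. -/
def SatStar {K : Type*} [Field K] (u v : K) (f : K[T;T⁻¹]) : Prop :=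
  (T 2 - 1) * (f * invert f) =
    C (u * v - 1) * (T 2 * invert f - f)
      - C (u - v) * (T 1 * f - T 1 * invert f)
      + C (u * v) * (T 2 - 1)

private lemma coeff_mul_top {K : Type*} [Field K] (p q : K[T;T⁻¹]) {a b : ℤ}
    (hp : ∀ k ∈ p.coeff.support, k ≤ a) (hq : ∀ k ∈ q.coeff.support, k ≤ b) :
    (p * q).coeff (a + b) = p.coeff a * q.coeff b := by
  classical
  rw [AddMonoidAlgebra.coeff_mul, Finsupp.sum, Finset.sum_eq_single a]
  · rw [Finsupp.sum, Finset.sum_eq_single b]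
    · rw [if_pos rfl]
    · intro j hj hjb
      exact if_neg (by omega)
    · intro h
      simp [Finsupp.notMem_support_iff.1 h]
  · intro i hi hia
    rw [Finsupp.sum]
    refine Finset.sum_eq_zero fun j hj => if_neg ?_
    have h1 := hp i hi
    have h2 := hq j hj
    omega
  · intro h
    simp [Finsupp.sum, Finsupp.notMem_support_iff.1 h]

private lemma coeff_mul_zero {K : Type*} [Field K] (p q : K[T;T⁻¹]) {a b N : ℤ}
    (hp : ∀ k ∈ p.coeff.support, k ≤ a) (hq : ∀ k ∈ q.coeff.support, k ≤ b) (hN : a + b < N) :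
    (p * q).coeff N = 0 := by
  classical
  rw [AddMonoidAlgebra.coeff_mul, Finsupp.sum]
  refine Finset.sum_eq_zero fun i hi => ?_
  rw [Finsupp.sum]
  refine Finset.sum_eq_zero fun j hj => if_neg ?_
  have h1 := hp i hi
  have h2 := hq j hj
  omega

/-- A nonzero solution of (★) has support contained in the non-positive
integers or in the non-negative integers. -/
theorem statement5 {K : Type*} [Field K] (u v : K) (f : K[T;T⁻¹]) (hf0 : f ≠ 0)
    (hf : SatStar u v f) :
    (∀ n ∈ f.coeff.support, n ≤ 0) ∨ (∀ n ∈ f.coeff.support, 0 ≤ n) := by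
  by_contra hcon
  push_neg at hcon
  obtain ⟨⟨n, hn, hn0⟩, m, hm, hm0⟩ := hcon
  have hne : f.coeff.support.Nonempty := ⟨n, hn⟩
  set d := f.coeff.support.max' hne with hd
  set e := f.coeff.support.min' hne with he
  have hub : ∀ k ∈ f.coeff.support, k ≤ d := fun k hk => Finset.le_max' _ _ hk
  have hlb : ∀ k ∈ f.coeff.support, e ≤ k := fun k hk => Finset.min'_le _ _ hk
  have hd1 : 1 ≤ d := le_trans hn0 (hub n hn)
  have he1 : e ≤ -1 := le_trans (hlb m hm) (by omega)
  have hfd : f.coeff d ≠ 0 := Finsupp.mem_support_iff.1 (f.coeff.support.max'_mem hne)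
  have hfe : f.coeff e ≠ 0 := Finsupp.mem_support_iff.1 (f.coeff.support.min'_mem hne)
  have hzero : ∀ k : ℤ, (d < k ∨ k < e) → f.coeff k = 0 := by
    intro k hk
    by_contra h
    have h1 := hub k (Finsupp.mem_support_iff.2 h)
    have h2 := hlb k (Finsupp.mem_support_iff.2 h)
    omega
  have hinv : ∀ k ∈ (invert f).coeff.support, k ≤ -e := by
    intro k hk
    have h1 : f.coeff (-k) ≠ 0 := by
      simpa using Finsupp.mem_support_iff.1 hk
    have h2 := hlb (-k) (Finsupp.mem_support_iff.2 h1)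
    omega
  set N : ℤ := d - e + 2 with hN
  have hmain := congrArg (fun p : K[T;T⁻¹] => p.coeff N) hf
  have hL : ((T 2 - 1) * (f * invert f) : K[T;T⁻¹]).coeff N = f.coeff d * f.coeff e := by
    rw [sub_mul, one_mul, AddMonoidAlgebra.coeff_sub, Finsupp.sub_apply]
    rw [show (T 2 : K[T;T⁻¹]) = AddMonoidAlgebra.single 2 1 from rfl,
      AddMonoidAlgebra.coeff_single_mul_apply, one_mul]
    have h1 : (f * invert f).coeff (N - 2) = f.coeff d * f.coeff e := by
      rw [show N - 2 = d + (-e) by omega, coeff_mul_top f (invert f) hub hinv]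
      congr 1
      rw [invert_apply, neg_neg]
    have h2 : (f * invert f).coeff N = 0 := coeff_mul_zero f (invert f) hub hinv (by omega)
    rw [show N - 2 = N - 2 from rfl] at h1
    rw [show (N - 2 : ℤ) = -2 + N by omega] at h1
    rw [h1, h2, sub_zero]
  have hC : ∀ (a : K) (p : K[T;T⁻¹]), (C a * p : K[T;T⁻¹]).coeff N = a * p.coeff N := by
    intro a p
    rw [show (C a : K[T;T⁻¹]) = AddMonoidAlgebra.single 0 a from rfl,
      AddMonoidAlgebra.coeff_single_mul_apply, neg_zero, zero_add]
  have e1 : (T 2 * invert f : K[T;T⁻¹]).coeff N = 0 := by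
    rw [show (T 2 : K[T;T⁻¹]) = AddMonoidAlgebra.single 2 1 from rfl,
      AddMonoidAlgebra.coeff_single_mul_apply, one_mul, invert_apply]
    exact hzero _ (Or.inr (by omega))
  have e2 : f.coeff N = 0 := hzero _ (Or.inl (by omega))
  have e3 : (T 1 * f : K[T;T⁻¹]).coeff N = 0 := by
    rw [show (T 1 : K[T;T⁻¹]) = AddMonoidAlgebra.single 1 1 from rfl,
      AddMonoidAlgebra.coeff_single_mul_apply, one_mul]
    exact hzero _ (Or.inl (by omega))
  have e4 : (T 1 * invert f : K[T;T⁻¹]).coeff N = 0 := by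
    rw [show (T 1 : K[T;T⁻¹]) = AddMonoidAlgebra.single 1 1 from rfl,
      AddMonoidAlgebra.coeff_single_mul_apply, one_mul, invert_apply]
    exact hzero _ (Or.inr (by omega))
  have e5 : (T 2 : K[T;T⁻¹]).coeff N = 0 := by
    rw [show (T 2 : K[T;T⁻¹]) = AddMonoidAlgebra.single 2 1 from rfl]
    rw [AddMonoidAlgebra.coeff_single]
    exact Finsupp.single_eq_of_ne (by omega)
  have e6 : (1 : K[T;T⁻¹]).coeff N = 0 := by
    rw [show (1 : K[T;T⁻¹]) = AddMonoidAlgebra.single 0 1 from rfl]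
    rw [AddMonoidAlgebra.coeff_single]
    exact Finsupp.single_eq_of_ne (by omega)
  rw [hL] at hmain
  simp only [AddMonoidAlgebra.coeff_add, AddMonoidAlgebra.coeff_sub, Finsupp.add_apply,
    Finsupp.sub_apply] at hmain
  rw [hC, hC, hC] at hmain
  simp only [AddMonoidAlgebra.coeff_sub, Finsupp.sub_apply] at hmain
  rw [e1, e2, e3, e4, e5, e6] at hmain
  simp only [sub_zero, zero_sub, sub_self, mul_zero, neg_zero, add_zero, zero_add,
    sub_zero] at hmain
  exact mul_ne_zero hfd hfe hmain
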